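/- For each integer k ≥ 0, define integers a_{k,m}(n) by the formal Laurent/power series expansion 1/((qz;q)_k (q/z;q)_k) = ∑_{n≥0} ∑_{m∈ℤ} a_{k,m}(n) z^m q^n, where (x;q)_k = ∏_{i=0}^{k-1}(1 - x q^i). Then for all integers m ≥ 0 and n ≥ 0, a_{k,m}(n) ≥ a_{k,m+2}(n). -/

import Mathlib

open Finset

/-- Auxiliary count with separate bound `N` on the entries. -/
def cnt (k : ℕ) (m : ℤ) (n N : ℕ) : ℕ :=
  (Finset.univ.filter
    (fun p : (Fin k → Fin (N + 1)) × (Fin k → Fin (N + 1)) =>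
      (∑ i : Fin k, (i.1 + 1) * (((p.1 i : ℕ)) + (p.2 i : ℕ)) = n) ∧
      ((∑ i : Fin k, ((p.1 i : ℕ) : ℤ)) - ∑ i : Fin k, ((p.2 i : ℕ) : ℤ)) = m)).card

lemma entry_le {k n N : ℕ} {f g : Fin k → Fin (N+1)}
    (h : ∑ i : Fin k, (i.1 + 1) * ((f i : ℕ) + (g i : ℕ)) = n) (i : Fin k) :
    (f i : ℕ) ≤ n ∧ (g i : ℕ) ≤ n := by
  have h1 : (i.1 + 1) * ((f i : ℕ) + (g i : ℕ)) ≤ n := by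
    rw [← h]
    exact Finset.single_le_sum (f := fun j => (j.1 + 1) * ((f j : ℕ) + (g j : ℕ)))
      (fun j _ => Nat.zero_le _) (mem_univ i)
  have h2 : (f i : ℕ) + (g i : ℕ) ≤ (i.1 + 1) * ((f i : ℕ) + (g i : ℕ)) :=
    Nat.le_mul_of_pos_left _ (Nat.succ_pos _)
  omega

lemma cnt_eq_cnt {k : ℕ} {m : ℤ} {n N : ℕ} (hN : n ≤ N) :
    cnt k m n N = cnt k m n n := by
  unfold cnt
  refine Finset.card_nbij'
    (fun p => (fun i => (⟨min (p.1 i : ℕ) n, by omega⟩ : Fin (n+1)),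
               fun i => (⟨min (p.2 i : ℕ) n, by omega⟩ : Fin (n+1))))
    (fun q => (fun i => (⟨(q.1 i : ℕ), by have := (q.1 i).2; omega⟩ : Fin (N+1)),
               fun i => (⟨(q.2 i : ℕ), by have := (q.2 i).2; omega⟩ : Fin (N+1))))
    ?_ ?_ ?_ ?_
  · intro p hp
    simp only [Finset.mem_coe, mem_filter, mem_univ, true_and] at hp ⊢
    have hb := fun i => entry_le hp.1 i
    have e1 : ∀ i : Fin k, min (p.1 i : ℕ) n = (p.1 i : ℕ) := fun i => min_eq_left (hb i).1
    have e2 : ∀ i : Fin k, min (p.2 i : ℕ) n = (p.2 i : ℕ) := fun i => min_eq_left (hb i).2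
    simp only [e1, e2]
    exact hp
  · intro q hq
    simp only [Finset.mem_coe, mem_filter, mem_univ, true_and] at hq ⊢
    exact hq
  · intro p hp
    simp only [Finset.mem_coe, mem_filter, mem_univ, true_and] at hp
    have hb := fun i => entry_le hp.1 i
    refine Prod.ext (funext fun i => ?_) (funext fun i => ?_) <;>
      simp [Fin.ext_iff, min_eq_left, (hb i).1, (hb i).2]
  · intro q hq
    refine Prod.ext (funext fun i => ?_) (funext fun i => ?_) <;>
      simp [Fin.ext_iff, min_eq_left, Nat.le_of_lt_succ (q.1 i).2, Nat.le_of_lt_succ (q.2 i).2]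

/-- `akm k m n` is the coefficient of `z^m q^n` in
`1/((qz;q)_k (q/z;q)_k) = ∏_{i=1}^{k} 1/((1 - z q^i)(1 - q^i/z))`, where
`(x;q)_k = ∏_{i=0}^{k-1} (1 - x q^i)`: it counts pairs `(α, β)` of `k`-tuples of
nonnegative integers with `∑_{i=1}^k i(α_i + β_i) = n` and `∑ α_i - ∑ β_i = m`. -/
def akm (k : ℕ) (m : ℤ) (n : ℕ) : ℕ :=
  (Finset.univ.filter
    (fun p : (Fin k → Fin (n + 1)) × (Fin k → Fin (n + 1)) =>
      (∑ i : Fin k, (i.1 + 1) * (((p.1 i : ℕ)) + (p.2 i : ℕ)) = n) ∧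
      ((∑ i : Fin k, ((p.1 i : ℕ) : ℤ)) - ∑ i : Fin k, ((p.2 i : ℕ) : ℤ)) = m)).card

lemma akm_eq_cnt (k : ℕ) (m : ℤ) (n : ℕ) : akm k m n = cnt k m n n := rfl

lemma akm_neg (k : ℕ) (m : ℤ) (n : ℕ) : akm k (-m) n = akm k m n := by
  unfold akm
  refine Finset.card_nbij' Prod.swap Prod.swap ?_ ?_ (by intro p _; simp) (by intro p _; simp)
  · intro p hp
    simp only [Finset.mem_coe, mem_filter, mem_univ, true_and, Prod.fst_swap, Prod.snd_swap] at hp ⊢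
    constructor
    · exact (Finset.sum_congr rfl fun i _ => by ring).trans hp.1
    · have := hp.2; omega
  · intro p hp
    simp only [Finset.mem_coe, mem_filter, mem_univ, true_and, Prod.fst_swap, Prod.snd_swap] at hp ⊢
    constructor
    · exact (Finset.sum_congr rfl fun i _ => by ring).trans hp.1
    · have := hp.2; omega

lemma akm_zero {m : ℤ} (hm : m ≠ 0) (n : ℕ) : akm 0 m n = 0 := by
  unfold akm
  rw [Finset.card_eq_zero, Finset.filter_false_of_mem]
  intro p _
  simp only [Finset.univ_eq_empty, Finset.sum_empty]
  rintro ⟨-, h⟩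
  exact hm (by omega)

lemma akm_rec (k : ℕ) (μ : ℤ) (n : ℕ) :
    akm (k+1) μ n =
      ∑ x ∈ (Finset.range (n+1) ×ˢ Finset.range (n+1)).filter
          (fun x => (k+1) * (x.1 + x.2) ≤ n),
        akm k (μ - x.1 + x.2) (n - (k+1) * (x.1 + x.2)) := by
  rw [show akm (k+1) μ n = (Finset.univ.filter
    (fun p : (Fin (k+1) → Fin (n + 1)) × (Fin (k+1) → Fin (n + 1)) =>
      (∑ i : Fin (k+1), (i.1 + 1) * (((p.1 i : ℕ)) + (p.2 i : ℕ)) = n) ∧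
      ((∑ i : Fin (k+1), ((p.1 i : ℕ) : ℤ)) - ∑ i : Fin (k+1), ((p.2 i : ℕ) : ℤ)) = μ)).card
    from rfl]
  rw [Finset.card_eq_sum_card_fiberwise
    (f := fun p : (Fin (k+1) → Fin (n + 1)) × (Fin (k+1) → Fin (n + 1)) =>
      ((p.1 (Fin.last k) : ℕ), (p.2 (Fin.last k) : ℕ)))
    (t := (Finset.range (n+1) ×ˢ Finset.range (n+1)).filter
          (fun x => (k+1) * (x.1 + x.2) ≤ n)) ?_]
  · refine Finset.sum_congr rfl fun x hx => ?_
    obtain ⟨a, b⟩ := x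
    simp only [Finset.mem_filter, Finset.mem_product, Finset.mem_range] at hx
    obtain ⟨⟨ha, hb⟩, hab⟩ := hx
    rw [akm_eq_cnt, ← cnt_eq_cnt (N := n) (by omega)]
    unfold cnt
    refine Finset.card_nbij'
      (fun p => (fun y => p.1 y.castSucc, fun y => p.2 y.castSucc))
      (fun q => (Fin.snoc q.1 ⟨a, ha⟩, Fin.snoc q.2 ⟨b, hb⟩))
      ?_ ?_ ?_ ?_
    · intro p hp
      simp only [Finset.mem_coe, Finset.mem_filter, Finset.mem_univ, true_and, Prod.mk.injEq] at hp ⊢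
      obtain ⟨⟨c1, c2⟩, e1, e2⟩ := hp
      rw [Fin.sum_univ_castSucc] at c1
      rw [Fin.sum_univ_castSucc, Fin.sum_univ_castSucc] at c2
      simp only [Fin.coe_castSucc, Fin.val_last, e1, e2] at c1 c2
      constructor
      · omega
      · -- integer condition
        omega
    · intro q hq
      simp only [Finset.mem_coe, Finset.mem_filter, Finset.mem_univ, true_and, Prod.mk.injEq] at hq ⊢
      obtain ⟨c1, c2⟩ := hq
      rw [Fin.sum_univ_castSucc, Fin.sum_univ_castSucc, Fin.sum_univ_castSucc]
      simp only [Fin.snoc_castSucc, Fin.snoc_last, Fin.coe_castSucc, Fin.val_last]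
      refine ⟨⟨?_, ?_⟩, trivial, trivial⟩
      · omega
      · push_cast

        omega
    · intro p hp
      simp only [Finset.mem_coe, Finset.mem_filter, Finset.mem_univ, true_and, Prod.mk.injEq] at hp
      obtain ⟨-, e1, e2⟩ := hp
      refine Prod.ext ?_ ?_
      · show Fin.snoc (Fin.init p.1) ⟨a, ha⟩ = p.1
        rw [show (⟨a, ha⟩ : Fin (n+1)) = p.1 (Fin.last k) from Fin.ext e1.symm,
          Fin.snoc_init_self]
      · show Fin.snoc (Fin.init p.2) ⟨b, hb⟩ = p.2
        rw [show (⟨b, hb⟩ : Fin (n+1)) = p.2 (Fin.last k) from Fin.ext e2.symm,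
          Fin.snoc_init_self]
    · intro q hq
      refine Prod.ext (funext fun y => ?_) (funext fun y => ?_) <;>
        simp [Fin.snoc_castSucc]
  · intro p hp
    simp only [Finset.mem_coe, Finset.mem_filter, Finset.mem_univ, true_and] at hp
    obtain ⟨c1, -⟩ := hp
    have h1 : ((Fin.last k).1 + 1) * ((p.1 (Fin.last k) : ℕ) + (p.2 (Fin.last k) : ℕ)) ≤
        ∑ i : Fin (k+1), (i.1 + 1) * ((p.1 i : ℕ) + (p.2 i : ℕ)) :=
      Finset.single_le_sum
        (f := fun j : Fin (k+1) => (j.1 + 1) * ((p.1 j : ℕ) + (p.2 j : ℕ)))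
        (fun j _ => Nat.zero_le _) (Finset.mem_univ _)
    rw [c1, Fin.val_last] at h1
    have h2 := entry_le c1 (Fin.last k)
    simp only [Finset.mem_coe, Finset.mem_filter, Finset.mem_product, Finset.mem_range]
    omega

lemma akm_chain (k : ℕ) (h : ∀ m : ℤ, 0 ≤ m → ∀ n, akm k (m+2) n ≤ akm k m n) :
    ∀ d : ℕ, ∀ m : ℤ, 0 ≤ m → ∀ n, akm k (m + 2*d) n ≤ akm k m n := by
  intro d
  induction d with
  | zero => intro m hm n; simp
  | succ d ih =>
    intro m hm n
    have e : m + 2*((d+1 : ℕ) : ℤ) = (m + 2) + 2*(d : ℤ) := by push_cast; ring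
    rw [e]
    exact le_trans (ih (m+2) (by omega) n) (h m hm n)

lemma akm_le (k : ℕ) (h : ∀ m : ℤ, 0 ≤ m → ∀ n, akm k (m+2) n ≤ akm k m n)
    {m : ℤ} (hm : 0 ≤ m) (s : ℕ) (n : ℕ) :
    akm k (m + 2 + s) n ≤ akm k (m - s) n := by
  rcases le_or_gt (s : ℤ) m with hs | hs
  · have e : m + 2 + (s : ℤ) = (m - s) + 2*((s+1 : ℕ) : ℤ) := by push_cast; ring
    rw [e]
    exact akm_chain k h (s+1) (m - s) (by omega) n
  · have e0 : akm k (m - s) n = akm k ((s : ℤ) - m) n := by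
      rw [← akm_neg k ((s:ℤ) - m) n]; congr 1; ring
    rw [e0]
    have e : m + 2 + (s : ℤ) = ((s : ℤ) - m) + 2*((m.toNat + 1 : ℕ) : ℤ) := by
      push_cast [Int.toNat_of_nonneg hm]; ring
    rw [e]
    exact akm_chain k h (m.toNat + 1) _ (by omega) n

lemma akm_key (k : ℕ) : ∀ m : ℤ, 0 ≤ m → ∀ n, akm k (m+2) n ≤ akm k m n := by
  induction k with
  | zero =>
    intro m hm n
    rw [akm_zero (by omega)]
    exact Nat.zero_le _
  | succ k ih =>
    intro m hm n
    rw [akm_rec, akm_rec]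
    set T := (Finset.range (n+1) ×ˢ Finset.range (n+1)).filter
        (fun x => (k+1) * (x.1 + x.2) ≤ n) with hT
    have hmemT : ∀ x1 x2 : ℕ, (x1, x2) ∈ T ↔ x1 < n+1 ∧ x2 < n+1 ∧ (k+1) * (x1 + x2) ≤ n := by
      intro x1 x2
      simp [hT, Finset.mem_filter, Finset.mem_product, Finset.mem_range, and_assoc]
    have hle1 : ∀ a b : ℕ, a + b ≤ (k+1) * (a + b) :=
      fun a b => Nat.le_mul_of_pos_left _ (Nat.succ_pos k)
    set σ : ℕ × ℕ → ℕ × ℕ := fun x => if x.1 = 0 then (x.2, 0) else (x.1 - 1, x.2 + 1) with hσ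
    set τ : ℕ × ℕ → ℕ × ℕ := fun x => if x.2 = 0 then (0, x.1) else (x.1 + 1, x.2 - 1) with hτ
    have hσ0 : ∀ x2 : ℕ, σ (0, x2) = (x2, 0) := fun x2 => by simp [hσ]
    have hσ1 : ∀ x1 x2 : ℕ, x1 ≠ 0 → σ (x1, x2) = (x1 - 1, x2 + 1) := fun x1 x2 h => by
      simp [hσ, h]
    have hτ0 : ∀ x1 : ℕ, τ (x1, 0) = (0, x1) := fun x1 => by simp [hτ]
    have hτ1 : ∀ x1 x2 : ℕ, x2 ≠ 0 → τ (x1, x2) = (x1 + 1, x2 - 1) := fun x1 x2 h => by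
      simp [hτ, h]
    have hmul : ∀ a b a' b' : ℕ, a + b = a' + b' → (k+1) * (a + b) = (k+1) * (a' + b') :=
      fun a b a' b' h => by rw [h]
    have hreindex :
        (∑ x ∈ T, akm k (m - (σ x).1 + (σ x).2) (n - (k+1) * ((σ x).1 + (σ x).2))) =
        ∑ x ∈ T, akm k (m - x.1 + x.2) (n - (k+1) * (x.1 + x.2)) := by
      refine Finset.sum_nbij' σ τ ?_ ?_ ?_ ?_ (fun x hx => rfl)
      · rintro ⟨x1, x2⟩ hx
        rw [hmemT] at hx
        rcases Nat.eq_zero_or_pos x1 with h0 | h0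
        · subst h0
          rw [hσ0, hmemT]
          have := hle1 0 x2
          refine ⟨by omega, by omega, ?_⟩
          rw [hmul x2 0 0 x2 (by omega)]; exact hx.2.2
        · rw [hσ1 x1 x2 (by omega), hmemT]
          have := hle1 x1 x2
          refine ⟨by omega, by omega, ?_⟩
          rw [hmul (x1-1) (x2+1) x1 x2 (by omega)]; exact hx.2.2
      · rintro ⟨x1, x2⟩ hx
        rw [hmemT] at hx
        rcases Nat.eq_zero_or_pos x2 with h0 | h0
        · subst h0
          rw [hτ0, hmemT]
          have := hle1 x1 0
          refine ⟨by omega, by omega, ?_⟩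
          rw [hmul 0 x1 x1 0 (by omega)]; exact hx.2.2
        · rw [hτ1 x1 x2 (by omega), hmemT]
          have := hle1 x1 x2
          refine ⟨by omega, by omega, ?_⟩
          rw [hmul (x1+1) (x2-1) x1 x2 (by omega)]; exact hx.2.2
      · rintro ⟨x1, x2⟩ hx
        rcases Nat.eq_zero_or_pos x1 with h0 | h0
        · subst h0
          rw [hσ0]
          rcases Nat.eq_zero_or_pos x2 with h1 | h1
          · subst h1; rw [hτ0]
          · rw [hτ0]
        · rw [hσ1 x1 x2 (by omega), hτ1 (x1 - 1) (x2 + 1) (by omega)]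
          simp only [Prod.mk.injEq]
          omega
      · rintro ⟨x1, x2⟩ hx
        rcases Nat.eq_zero_or_pos x2 with h0 | h0
        · subst h0
          rw [hτ0, hσ0]
        · rw [hτ1 x1 x2 (by omega), hσ1 (x1 + 1) (x2 - 1) (by omega)]
          simp only [Prod.mk.injEq]
          omega
    rw [← hreindex]
    refine Finset.sum_le_sum ?_
    rintro ⟨x1, x2⟩ hx
    rw [hmemT] at hx
    rcases Nat.eq_zero_or_pos x1 with h0 | h0
    · subst h0
      rw [hσ0]
      dsimp only
      have ea : m + 2 - ((0:ℕ) : ℤ) + (x2 : ℤ) = m + 2 + (x2 : ℤ) := by push_cast; ring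
      have eb : m - (x2 : ℤ) + ((0:ℕ) : ℤ) = m - (x2 : ℤ) := by push_cast; ring
      rw [ea, eb, hmul x2 0 0 x2 (by omega)]
      exact akm_le k ih hm x2 _
    · rw [hσ1 x1 x2 (by omega)]
      dsimp only
      apply le_of_eq
      have e1 : m + 2 - (x1 : ℤ) + (x2 : ℤ) = m - ((x1 - 1 : ℕ) : ℤ) + ((x2 + 1 : ℕ) : ℤ) := by
        omega
      rw [e1, hmul (x1-1) (x2+1) x1 x2 (by omega)]

theorem akm_antitone (k : ℕ) (m : ℤ) (hm : 0 ≤ m) (n : ℕ) :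
    akm k (m + 2) n ≤ akm k m n := akm_key k m hm n
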